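/- Assume Hypothesis DP(a,b,C₀) with 2b + a > 1. Then for every constant c > 0 there is a constant C (depending on a, b, C₀, c) such that the following holds. Let r ≥ 1 be an integer, E ≥ 1 a real, and let X be an undirected unweighted graph on N vertices with N ≥ r^{2b/(2b+a−1)}·E^{1/(2b+a−1)}. Let Q be a pair set on X with |Q| ≤ c·r^{2(1−a)/(2b+a−1)}·E^{2/(2b+a−1)}. Then (X,Q) admits a pairwise distance preserver on at most C·N·E edges. -/

import Mathlib

/-- **Hypothesis DP(a, b, C₀):** every undirected unweighted graph on `N` vertices together
with any pair set `P` admits a pairwise distance preserver on at most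
`C₀ · (N + N^a · |P|^b)` edges. -/
def DPHyp (a b C₀ : ℝ) : Prop :=
  ∀ (V : Type) [Fintype V] (G : SimpleGraph V) (P : Finset (V × V)),
    ∃ H : SimpleGraph V, H ≤ G ∧
      (∀ p ∈ P, H.dist p.1 p.2 = G.dist p.1 p.2) ∧
      (H.edgeSet.ncard : ℝ) ≤
        C₀ * ((Fintype.card V : ℝ) + (Fintype.card V : ℝ) ^ a * (P.card : ℝ) ^ b)

set_option maxHeartbeats 1000000 in
/-- **Cheap preservers in large clusters.** Assume `DP(a,b,C₀)` with `2b + a > 1`. For every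
constant `c > 0` there is a constant `C` such that: for every integer `r ≥ 1`, real `E ≥ 1`,
graph `X` on `N ≥ r^(2b/(2b+a-1)) · E^(1/(2b+a-1))` vertices, and pair set `Q` with
`|Q| ≤ c · r^(2(1-a)/(2b+a-1)) · E^(2/(2b+a-1))`, the pair `(X, Q)` admits a pairwise
distance preserver on at most `C · N · E` edges. -/
theorem large_cluster_preserver (a b C₀ : ℝ) (ha0 : 0 ≤ a) (ha1 : a < 1)
    (hb0 : 0 < b) (hb1 : b ≤ 1) (hab : 1 < 2 * b + a) (hDP : DPHyp a b C₀)
    (c : ℝ) (hc : 0 < c) :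
    ∃ C : ℝ, 0 < C ∧
      ∀ (V : Type) [Fintype V] (X : SimpleGraph V) (r : ℕ), 1 ≤ r →
        ∀ E : ℝ, 1 ≤ E →
        ((r : ℝ) ^ (2 * b / (2 * b + a - 1)) * E ^ (1 / (2 * b + a - 1)) ≤
          (Fintype.card V : ℝ)) →
        ∀ Q : Finset (V × V),
          ((Q.card : ℝ) ≤
            c * (r : ℝ) ^ (2 * (1 - a) / (2 * b + a - 1)) * E ^ (2 / (2 * b + a - 1))) →
          ∃ H : SimpleGraph V, H ≤ X ∧
            (∀ q ∈ Q, H.dist q.1 q.2 = X.dist q.1 q.2) ∧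
            (H.edgeSet.ncard : ℝ) ≤ C * (Fintype.card V : ℝ) * E := by
  set s : ℝ := 2 * b + a - 1 with hsdef
  have hs0 : 0 < s := by simp only [hsdef]; linarith
  refine ⟨max C₀ 0 * (1 + c ^ b) + 1, by positivity, ?_⟩
  intro V _ X r hr E hE hN Q hQ
  obtain ⟨H, hHle, hHdist, hHcard⟩ := hDP V X Q
  refine ⟨H, hHle, hHdist, ?_⟩
  set N : ℝ := (Fintype.card V : ℝ) with hNdef
  have hr1 : (1 : ℝ) ≤ (r : ℝ) := by exact_mod_cast hr
  have hrpos : (0 : ℝ) < (r : ℝ) := by linarith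
  set M : ℝ := (r : ℝ) ^ (2 * b / s) * E ^ (1 / s) with hMdef
  have hM1 : (1 : ℝ) ≤ M := by
    have h1 : (1 : ℝ) ≤ (r : ℝ) ^ (2 * b / s) := Real.one_le_rpow hr1 (by positivity)
    have h2 : (1 : ℝ) ≤ E ^ (1 / s) := Real.one_le_rpow hE (by positivity)
    nlinarith [h1, h2]
  have hMpos : (0 : ℝ) < M := by linarith
  have hN1 : (1 : ℝ) ≤ N := le_trans hM1 hN
  have hNpos : (0 : ℝ) < N := by linarith
  -- step 1: bound Q^b
  have step1 : ((Q.card : ℝ)) ^ b ≤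
      c ^ b * (r : ℝ) ^ (2 * (1 - a) / s * b) * E ^ (2 / s * b) := by
    have h := Real.rpow_le_rpow (by positivity) hQ hb0.le
    calc ((Q.card : ℝ)) ^ b ≤
        (c * (r : ℝ) ^ (2 * (1 - a) / s) * E ^ (2 / s)) ^ b := h
      _ = c ^ b * (r : ℝ) ^ (2 * (1 - a) / s * b) * E ^ (2 / s * b) := by
          rw [Real.mul_rpow (by positivity) (by positivity),
            Real.mul_rpow (by positivity) (by positivity),
            ← Real.rpow_mul hrpos.le, ← Real.rpow_mul (by linarith : (0:ℝ) ≤ E)]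
  -- step 2: bound N^(a-1)
  have step2 : N ^ (a - 1) ≤ (r : ℝ) ^ (2 * b / s * (a - 1)) * E ^ (1 / s * (a - 1)) := by
    have h := Real.rpow_le_rpow_of_nonpos hMpos hN (by linarith : a - 1 ≤ 0)
    calc N ^ (a - 1) ≤ M ^ (a - 1) := h
      _ = _ := by
          rw [hMdef, Real.mul_rpow (by positivity) (by positivity),
            ← Real.rpow_mul hrpos.le, ← Real.rpow_mul (by linarith : (0:ℝ) ≤ E)]
  -- key inequality
  have key : N ^ a * ((Q.card : ℝ)) ^ b ≤ c ^ b * (N * E) := by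
    have hNa : N ^ a = N * N ^ (a - 1) := by
      have ha : a = 1 + (a - 1) := by ring
      rw [ha, Real.rpow_add hNpos, Real.rpow_one]
      ring_nf
    have hQb0 : (0 : ℝ) ≤ ((Q.card : ℝ)) ^ b := by positivity
    have hcomb : N ^ (a - 1) * ((Q.card : ℝ)) ^ b ≤ c ^ b * E := by
      have hmul := mul_le_mul step2 step1 hQb0 (by positivity)
      calc N ^ (a - 1) * ((Q.card : ℝ)) ^ b
          ≤ ((r : ℝ) ^ (2 * b / s * (a - 1)) * E ^ (1 / s * (a - 1))) *
            (c ^ b * (r : ℝ) ^ (2 * (1 - a) / s * b) * E ^ (2 / s * b)) := hmul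
        _ = c ^ b * ((r : ℝ) ^ (2 * b / s * (a - 1)) * (r : ℝ) ^ (2 * (1 - a) / s * b)) *
            (E ^ (1 / s * (a - 1)) * E ^ (2 / s * b)) := by ring
        _ = c ^ b * E := by
            rw [← Real.rpow_add hrpos, ← Real.rpow_add (by linarith : (0:ℝ) < E)]
            have e1 : 2 * b / s * (a - 1) + 2 * (1 - a) / s * b = 0 := by
              field_simp; ring
            have e2 : 1 / s * (a - 1) + 2 / s * b = 1 := by
              rw [div_mul_eq_mul_div, div_mul_eq_mul_div, ← add_div,
                div_eq_one_iff_eq hs0.ne', hsdef]; ring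
            rw [e1, e2, Real.rpow_zero, Real.rpow_one, mul_one]
    calc N ^ a * ((Q.card : ℝ)) ^ b = N * (N ^ (a - 1) * ((Q.card : ℝ)) ^ b) := by
          rw [hNa]; ring
      _ ≤ N * (c ^ b * E) := by
          exact mul_le_mul_of_nonneg_left hcomb hNpos.le
      _ = c ^ b * (N * E) := by ring
  -- assemble
  have hNE1 : (1 : ℝ) ≤ N * E := by nlinarith
  have hsum0 : (0 : ℝ) ≤ N + N ^ a * ((Q.card : ℝ)) ^ b := by positivity
  have hcb0 : (0 : ℝ) ≤ c ^ b := by positivity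
  calc (H.edgeSet.ncard : ℝ) ≤ C₀ * (N + N ^ a * ((Q.card : ℝ)) ^ b) := hHcard
    _ ≤ max C₀ 0 * (N + N ^ a * ((Q.card : ℝ)) ^ b) :=
        mul_le_mul_of_nonneg_right (le_max_left _ _) hsum0
    _ ≤ max C₀ 0 * (N * E + c ^ b * (N * E)) := by
        have h1 : N ≤ N * E := by nlinarith
        have := add_le_add h1 key
        exact mul_le_mul_of_nonneg_left this (le_max_right C₀ 0)
    _ = max C₀ 0 * (1 + c ^ b) * N * E := by ring
    _ ≤ (max C₀ 0 * (1 + c ^ b) + 1) * N * E := by nlinarith
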